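/- arXiv:2301.12574 — 3 statements merged into one kernel-verified Lean document; each statement's English description precedes it below -/
import Mathlib

section
/- For all 2×2 complex matrices A and B, the trace of A²BAB² equals the trace of B²ABA². -/
open Matrix

theorem stmt_0 (A B : Matrix (Fin 2) (Fin 2) ℂ) :
    (A * A * B * A * B * B).trace = (B * B * A * B * A * A).trace := by
  simp only [Matrix.trace, Matrix.diag, Matrix.mul_apply, Fin.sum_univ_two]
  ring
end

section
/- Let (x,y,z,u,v) ∈ ℝ⁵ and suppose the symmetric 3×3 matrix M with rows (u, x/2, z/2), (x/2, 1, y/2), (z/2, y/2, v) is positive definite. Then there do not exist real 2×2 matrices A, B with tr A = x, tr B = y, tr(AB) = z, det A = u, det B = v. -/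
open Matrix

theorem stmt_15 (x y z u v : ℝ)
    (hM : (!![u, x/2, z/2; x/2, 1, y/2; z/2, y/2, v] : Matrix (Fin 3) (Fin 3) ℝ).PosDef) :
    ¬ ∃ A B : Matrix (Fin 2) (Fin 2) ℝ,
      A.trace = x ∧ B.trace = y ∧ (A * B).trace = z ∧ A.det = u ∧ B.det = v := by
  rintro ⟨A, B, hx, hy, hz, hu, hv⟩
  classical
  set w : Fin 2 → ℝ := ![1, 0] with hw_def
  have hw : w ≠ 0 := by
    intro h
    have := congrFun h 0
    simp [hw_def] at this
  set vv : Fin 3 → (Fin 2 → ℝ) := ![A *ᵥ w, w, (adjugate B) *ᵥ w] with hvv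
  have hdep : ¬ LinearIndependent ℝ vv := by
    intro h
    have hcard := h.fintype_card_le_finrank
    simp [Module.finrank_fintype_fun_eq_card] at hcard
  obtain ⟨g, hsum, i, hgi⟩ := Fintype.not_linearIndependent_iff.mp hdep
  have hg : g ≠ 0 := fun h0 => hgi (by rw [h0]; rfl)
  set N : Matrix (Fin 2) (Fin 2) ℝ := g 0 • A + g 1 • (1 : Matrix (Fin 2) (Fin 2) ℝ)
      + g 2 • adjugate B with hN_def
  have hNw : N *ᵥ w = 0 := by
    have : ∑ i, g i • vv i = 0 := hsum
    rw [Fin.sum_univ_three] at this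
    simp only [hvv, Matrix.cons_val_zero, Matrix.cons_val_one, Matrix.head_cons,
      Matrix.cons_val_two, Matrix.tail_cons] at this
    rw [hN_def, Matrix.add_mulVec, Matrix.add_mulVec, Matrix.smul_mulVec,
      Matrix.smul_mulVec, Matrix.smul_mulVec, Matrix.one_mulVec]
    exact this
  have hdet : N.det = 0 := by
    by_contra h
    exact hw (Matrix.eq_zero_of_mulVec_eq_zero h hNw)
  have hpos := hM.dotProduct_mulVec_pos hg
  have hquad : dotProduct (star g) ((!![u, x/2, z/2; x/2, 1, y/2; z/2, y/2, v] : Matrix (Fin 3) (Fin 3) ℝ) *ᵥ g) = N.det := by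
    subst hx hy hz hu hv
    rw [hN_def]
    simp only [star_trivial, dotProduct, Matrix.mulVec, Matrix.det_fin_two,
      Matrix.trace_fin_two, Matrix.mul_apply, Matrix.adjugate_fin_two,
      Fin.sum_univ_three, Fin.sum_univ_two, Matrix.add_apply, Matrix.smul_apply,
      Matrix.one_apply, Matrix.cons_val', Matrix.cons_val_zero, Matrix.cons_val_one,
      Matrix.head_cons, Matrix.empty_val', Matrix.cons_val_fin_one, Matrix.head_fin_const,
      Matrix.cons_val_two, Matrix.tail_cons, smul_eq_mul]
    norm_num
    simp only [Matrix.cons_val]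
    ring
  rw [hquad, hdet] at hpos
  exact lt_irrefl 0 hpos
end

section
/- Let 4u − x² > 0, 4v − y² > 0 be real numbers with the determinant of M := [[u, x/2, z/2],[x/2, 1, y/2],[z/2, y/2, v]] at most 0. Then there exist real 2×2 matrices A, B with tr A = x, det A = u, tr B = y, det B = v, tr(AB) = z. -/
open Matrix

theorem stmt_17 (x y z u v : ℝ) (hu : 4 * u - x ^ 2 > 0) (hv : 4 * v - y ^ 2 > 0)
    (hdet : (!![u, x/2, z/2; x/2, 1, y/2; z/2, y/2, v] : Matrix (Fin 3) (Fin 3) ℝ).det ≤ 0) :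
    ∃ A B : Matrix (Fin 2) (Fin 2) ℝ,
      A.trace = x ∧ A.det = u ∧ B.trace = y ∧ B.det = v ∧ (A * B).trace = z := by
  have ha0 : (0:ℝ) < u - x^2/4 := by linarith
  have hb0 : (0:ℝ) < v - y^2/4 := by linarith
  set a := Real.sqrt (u - x^2/4) with ha_def
  set b := Real.sqrt (v - y^2/4) with hb_def
  have ha : a^2 = u - x^2/4 := Real.sq_sqrt ha0.le
  have hb : b^2 = v - y^2/4 := Real.sq_sqrt hb0.le
  have hap : 0 < a := Real.sqrt_pos.mpr ha0
  have hbp : 0 < b := Real.sqrt_pos.mpr hb0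
  have habp : 0 < a * b := mul_pos hap hbp
  set t := (x*y/2 - z)/(a*b) with ht_def
  have hdet' : u*v - u*y^2/4 - x^2*v/4 + x*y*z/4 - z^2/4 ≤ 0 := by
    have := hdet
    simp [Matrix.det_fin_three] at this
    nlinarith [this]
  have habt : a * b * t = x*y/2 - z := by
    field_simp [ht_def]
    rw [ht_def]; field_simp <;> ring
  have ht4 : t^2 - 4 ≥ 0 := by
    by_contra h
    push_neg at h
    have h1 : (a*b*t)^2 = (x*y/2 - z)^2 := by rw [habt]
    have h2 : (a*b)^2 = (u - x^2/4)*(v - y^2/4) := by rw [mul_pow, ha, hb]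
    have h3 : (a*b)^2 * t^2 < (a*b)^2 * 4 := by
      apply mul_lt_mul_of_pos_left (by linarith) (pow_pos habp 2)
    nlinarith [h1, h2, h3]
  set s := Real.sqrt (t^2 - 4) with hs_def
  have hs : s^2 = t^2 - 4 := Real.sq_sqrt ht4
  set μ := (t + s)/2 with hμ_def
  have hquad : μ * (t - μ) = 1 := by
    have hsμ : s = 2*μ - t := by rw [hμ_def]; ring
    have h1 : μ * (t - μ) = (t^2 - s^2)/4 := by rw [hsμ]; ring
    rw [h1, hs]; ring
  have hμ0 : μ ≠ 0 := by
    intro h; rw [h, zero_mul] at hquad; exact one_ne_zero hquad.symm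
  have hμsum : μ + 1/μ = t := by
    have h1 : t - μ = 1/μ := eq_one_div_of_mul_eq_one_left (by linarith [hquad, mul_comm μ (t - μ)])
    rw [← h1]; ring
  clear hdet ht_def hμ_def hs_def ha_def hb_def
  clear_value a b t s μ
  refine ⟨!![x/2, -a; a, x/2], !![y/2, -(b/μ); μ*b, y/2], ?_, ?_, ?_, ?_, ?_⟩
  · rw [Matrix.trace_fin_two_of]; ring
  · rw [Matrix.det_fin_two_of]; nlinarith [ha]
  · rw [Matrix.trace_fin_two_of]; ring
  · rw [Matrix.det_fin_two_of]
    have : -(b/μ) * (μ*b) = -b^2 := by field_simp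
    rw [show y/2 * (y/2) - -(b/μ) * (μ*b) = y^2/4 - (-(b/μ)*(μ*b)) by ring, this, hb]
    ring
  · rw [Matrix.mul_fin_two, Matrix.trace_fin_two_of]
    have e1 : a * (-(b/μ)) = -(a*b*(1/μ)) := by ring
    have e2 : x/2 * (y/2) + -a * (μ*b) + (a * (-(b/μ)) + x/2 * (y/2))
        = x*y/2 - a*b*(μ + 1/μ) := by rw [e1]; ring
    rw [e2, hμsum, habt]
    ring
end
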